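/- The improper integral ∫₀^∞ s∘exp(−tΔ) dt converges and equals s, where Δ := ds + sd is the Laplacian of an abstract Hodge decomposition. -/

import Mathlib

open MeasureTheory NormedSpace

set_option synthInstance.maxHeartbeats 1000000 in
set_option maxHeartbeats 1000000 in
/-- The improper integral `∫₀^∞ s ∘ exp(−tΔ) dt` converges and equals `s`,
where `Δ := ds + sd` is the Laplacian of an abstract Hodge decomposition on a
finite-dimensional space. -/
theorem integral_s_exp_laplacian (A : Type*) [NormedAddCommGroup A] [NormedSpace ℝ A]
    [FiniteDimensional ℝ A]
    (d s π : A →L[ℝ] A)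
    (hd : d * d = 0)
    (hds : d * s + s * d = 1 - π)
    (hs : s * s = 0)
    (hπ : π * π = π)
    (hdπ : d * π = 0) (hπd : π * d = 0)
    (hπs : π * s = 0) (hsπ : s * π = 0) :
    MeasureTheory.IntegrableOn
        (fun t : ℝ => s * NormedSpace.exp (-(t • (d * s + s * d)))) (Set.Ioi 0) ∧
      ∫ t in Set.Ioi (0 : ℝ), s * NormedSpace.exp (-(t • (d * s + s * d))) = s := by
  set Δ := d * s + s * d with hΔ
  have hsΔ : s * Δ = s := by
    rw [hds, mul_sub, mul_one, hsπ, sub_zero]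
  have hsΔn : ∀ n : ℕ, s * Δ ^ n = s := by
    intro n
    induction n with
    | zero => simp
    | succ n ih => rw [pow_succ, ← mul_assoc, ih, hsΔ]
  have key : ∀ t : ℝ, s * NormedSpace.exp (-(t • Δ)) = Real.exp (-t) • s := by
    intro t
    have h1 : -(t • Δ) = (-t) • Δ := by rw [neg_smul]
    rw [h1, exp_eq_tsum (𝕂 := ℝ)]
    have hsum : Summable fun n : ℕ => ((n.factorial : ℝ)⁻¹) • ((-t) • Δ) ^ n :=
      expSeries_summable' (𝕂 := ℝ) ((-t) • Δ)
    rw [← hsum.tsum_mul_left s]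
    have hterm : ∀ n : ℕ, s * ((n.factorial : ℝ)⁻¹ • ((-t) • Δ) ^ n) = ((n.factorial : ℝ)⁻¹ * (-t) ^ n) • s := by
      intro n
      rw [smul_pow, smul_smul, mul_smul_comm ((n.factorial:ℝ)⁻¹ * (-t)^n) s (Δ^n), hsΔn n]
    have hsum2 : Summable fun n : ℕ => (n.factorial : ℝ)⁻¹ * (-t) ^ n := by
      have := expSeries_summable' (𝕂 := ℝ) (-t)
      simpa [smul_eq_mul] using this
    simp only [hterm]
    rw [hsum2.tsum_smul_const]
    congr 1
    rw [Real.exp_eq_exp_ℝ, exp_eq_tsum (𝕂 := ℝ)]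
    simp [smul_eq_mul]
  constructor
  · apply IntegrableOn.congr_fun _ (fun t _ => (key t).symm) measurableSet_Ioi
    exact ((exp_neg_integrableOn_Ioi 0 one_pos).congr_fun (fun x _ => by rw [neg_one_mul]) measurableSet_Ioi).smul_const s
  · rw [setIntegral_congr_fun measurableSet_Ioi (fun t _ => key t), integral_smul_const,
      integral_exp_neg_Ioi_zero, one_smul]
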